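/- Let F be a field, V an F-vector space of finite dimension r, A = End_F(V), and L a subalgebra of A (containing F·id) that is a field, with ℓ = dim_F(L). Then V is a free L-module, so ℓ divides r, say r = ℓ·q; the centralizer B of L in A is isomorphic as an F-algebra to the matrix algebra M_q(L); and the centralizer of B in A equals L. -/

import Mathlib

set_option maxHeartbeats 1000000 in
set_option synthInstance.maxHeartbeats 400000 in
theorem field_subalgebra_of_endomorphisms
    (F V : Type*) [Field F] [AddCommGroup V] [Module F V] [FiniteDimensional F V]
    (L : Subalgebra F (Module.End F V)) (hL : IsField L) :
    ∃ q : ℕ,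
      Module.finrank F V = Module.finrank F L * q ∧
      (letI : Module L V := Module.compHom V L.val.toRingHom
       Nonempty (Module.Basis (Fin q) L V)) ∧
      Nonempty ((Subalgebra.centralizer F (L : Set (Module.End F V))) ≃ₐ[F]
        Matrix (Fin q) (Fin q) L) ∧
      Subalgebra.centralizer F
          ((Subalgebra.centralizer F (L : Set (Module.End F V))) : Set (Module.End F V))
        = L := by
  letI : Field L := hL.toField
  letI : Module L V := Module.compHom V L.val.toRingHom
  have smul_def : ∀ (x : L) (v : V), x • v = (x : Module.End F V) v := fun _ _ => rfl
  haveI : IsScalarTower F L V := ⟨fun c x v => by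
    rw [smul_def, smul_def, Subalgebra.coe_smul, LinearMap.smul_apply]⟩
  haveI : SMulCommClass L L V := ⟨fun a b v => by rw [smul_smul, smul_smul, mul_comm]⟩
  haveI : IsScalarTower L L V := ⟨fun a b v => by rw [smul_eq_mul, smul_smul]⟩
  letI : Algebra L (Module.End L V) := @Module.End.instAlgebra L L V _ _ _ _ _ ‹SMulCommClass L L V› _ ‹IsScalarTower L L V›
  haveI : Module.Finite L V := @Module.Finite.of_restrictScalars_finite F L V _ _ _ _ _ _ ‹IsScalarTower F L V› _
  haveI : LinearMap.CompatibleSMul V V F L :=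
    @LinearMap.IsScalarTower.compatibleSMul _ _ _ _ _ _ _ _ _ _ _ _ ‹IsScalarTower F L V› ‹IsScalarTower F L V›
  set q := Module.finrank L V with hq
  have b : Module.Basis (Fin q) L V := Module.finBasis L V
  -- L-linearity of centralizer elements
  have hlin : ∀ g ∈ Subalgebra.centralizer F (L : Set (Module.End F V)),
      ∀ (x : L) (v : V), g (x • v) = x • g v := by
    intro g hg x v
    rw [Subalgebra.mem_centralizer_iff] at hg
    have := hg x x.2
    rw [smul_def, smul_def, ← Module.End.mul_apply, ← Module.End.mul_apply, this]
  -- membership of restricted L-linear maps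
  have hmem : ∀ f : Module.End L V,
      (f.restrictScalars F : Module.End F V) ∈
        Subalgebra.centralizer F (L : Set (Module.End F V)) := by
    intro f
    rw [Subalgebra.mem_centralizer_iff]
    intro y hy
    ext v
    have : f ((⟨y, hy⟩ : L) • v) = (⟨y, hy⟩ : L) • f v := f.map_smul _ _
    simpa [smul_def] using this.symm
  -- ring equiv to End L V
  let E : (Subalgebra.centralizer F (L : Set (Module.End F V))) ≃+* Module.End L V :=
  { toFun := fun g => ⟨⟨g.1, g.1.map_add⟩, fun x v => hlin g.1 g.2 x v⟩
    invFun := fun f => ⟨f.restrictScalars F, hmem f⟩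
    left_inv := fun g => rfl
    right_inv := fun f => rfl
    map_add' := fun f g => rfl
    map_mul' := fun f g => rfl }
  refine ⟨q, ?_, ⟨b⟩, ?_, ?_⟩
  · exact (@Module.finrank_mul_finrank F L V _ _ _ _ _ _ ‹IsScalarTower F L V› _ _ _ _).symm
  · refine ⟨AlgEquiv.ofRingEquiv (f := E.trans (algEquivMatrix b).toRingEquiv) ?_⟩
    intro c
    have h1 : E (algebraMap F _ c) = algebraMap L (Module.End L V) (algebraMap F L c) := by
      refine LinearMap.ext fun v => ?_
      show (algebraMap F (Module.End F V) c) v = ((algebraMap F L c : L) : Module.End F V) v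
      rw [Subalgebra.coe_algebraMap]
    rw [RingEquiv.trans_apply, h1]
    have h2 : (algEquivMatrix b).toRingEquiv (algebraMap L (Module.End L V) (algebraMap F L c))
        = algebraMap L (Matrix (Fin q) (Fin q) L) (algebraMap F L c) :=
      (algEquivMatrix b).commutes _
    rw [h2, ← IsScalarTower.algebraMap_apply F L (Matrix (Fin q) (Fin q) L)]
  · apply le_antisymm
    · intro g hg
      rw [Subalgebra.mem_centralizer_iff] at hg
      by_cases hq0 : q = 0
      · have : Subsingleton V := by
          rw [← Module.finrank_zero_iff (R := L)]; exact hq0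
        have : g = 0 := LinearMap.ext fun v => Subsingleton.elim _ _
        rw [this]; exact zero_mem L
      · have i : Fin q := ⟨0, Nat.pos_of_ne_zero hq0⟩
        set x : L := b.coord i (g (b i)) with hx
        have key : ∀ w : V, g w = (x : Module.End F V) w := by
          intro w
          let f : Module.End L V := @LinearMap.smulRight L L V V _ _ _ _ _ _ _ _ ‹IsScalarTower L L V› (b.coord i) w
          have hf := hg _ (hmem f)
          have happ : g (f (b i)) = f (g (b i)) := by
            have := congrArg (fun h => h (b i)) hf
            simpa [Module.End.mul_apply] using this.symm
          have hfb : f (b i) = w := by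
            show (b.coord i (b i)) • w = w
            rw [Module.Basis.coord_apply, Module.Basis.repr_self, Finsupp.single_eq_same, one_smul]
          rw [hfb] at happ
          rw [happ]
          show (b.coord i (g (b i))) • w = _
          rw [← hx, smul_def]
        have : g = (x : Module.End F V) := LinearMap.ext key
        rw [this]; exact x.2
    · intro x hx
      rw [Subalgebra.mem_centralizer_iff]
      intro g hg
      rw [SetLike.mem_coe, Subalgebra.mem_centralizer_iff] at hg
      exact (hg x hx).symm
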